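/- Let 0 ≤ k ≤ n be integers, α,β,γ > -1 real, and (x,y) with x > 0, y > 0, x+y < 1. Then ∂ⁿ/∂xᵏ∂y^{n-k} [x^{k+α} y^{n-k+β} (1-x-y)^{n+γ}] = x^α y^β (1-x-y)^γ · (α+1)_k (β+1)_{n-k} · Σ_{i=0}^{k} Σ_{j=0}^{n-k} [(-γ-n)_{i+j} (-k)_i (k-n)_j / ((α+1)_i (β+1)_j i! j!)] · (-1)^{i+j} x^i y^j (1-x-y)^{n-i-j}. In particular the function [x^α y^β (1-x-y)^γ]^{-1} ∂ⁿ/∂xᵏ∂y^{n-k}[x^{k+α} y^{n-k+β}(1-x-y)^{n+γ}] is a polynomial in (x,y) of total degree at most n. -/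

import Mathlib

open Real Finset

/-- The Pochhammer symbol `(a)_k = a(a+1)⋯(a+k-1) = Γ(a+k)/Γ(a)`. -/
noncomputable def poch (a : ℝ) (k : ℕ) : ℝ := ∏ i ∈ Finset.range k, (a + (i : ℝ))

/-- Iterated partial derivative `∂^{k+l}/∂x^k ∂y^l` of a two-variable function. -/
noncomputable def pderiv2 (k l : ℕ) (f : ℝ → ℝ → ℝ) (x y : ℝ) : ℝ :=
  iteratedDeriv k (fun s => iteratedDeriv l (fun t => f s t) y) x

noncomputable def ff (a : ℝ) (p : ℕ) : ℝ := ∏ i ∈ Finset.range p, (a - (i : ℝ))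
lemma ff_succ (a : ℝ) (p : ℕ) : ff a (p+1) = ff a p * (a - p) := Finset.prod_range_succ _ _

lemma poch_pos {a : ℝ} (ha : 0 < a) (p : ℕ) : 0 < poch a p :=
  Finset.prod_pos fun i _ => by positivity

lemma poch_neg (a : ℝ) (p : ℕ) : poch (-a) p = (-1)^p * ff a p := by
  unfold poch ff
  have : ∀ i ∈ Finset.range p, (-a + (i:ℝ)) = (-1) * (a - i) := fun i _ => by ring
  rw [Finset.prod_congr rfl this, Finset.prod_mul_distrib, Finset.prod_const, Finset.card_range]

lemma ff_add (a : ℝ) (p q : ℕ) : ff a (p+q) = ff a p * ff (a - p) q := by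
  unfold ff
  rw [Finset.prod_range_add]
  congr 1
  exact Finset.prod_congr rfl fun i _ => by push_cast; ring

lemma poch_add (a : ℝ) (p q : ℕ) : poch a (p+q) = poch a p * poch (a + p) q := by
  unfold poch
  rw [Finset.prod_range_add]
  congr 1
  exact Finset.prod_congr rfl fun i _ => by push_cast; ring

lemma ff_cast (k i : ℕ) : ff (k:ℝ) i = (k.descFactorial i : ℝ) := by
  induction i with
  | zero => simp [ff]
  | succ i IH =>
    rw [ff_succ, IH, Nat.descFactorial_succ]
    rcases le_or_gt i k with h | h
    · push_cast [Nat.cast_sub h]; ring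
    · rw [Nat.descFactorial_eq_zero_iff_lt.2 h]
      push_cast; ring

lemma ff_cast' (k i : ℕ) : ff (k:ℝ) i = (Nat.factorial i : ℝ) * (k.choose i : ℝ) := by
  rw [ff_cast, Nat.descFactorial_eq_factorial_mul_choose]; push_cast; ring

lemma poch_shift (b : ℝ) (k i : ℕ) (h : i ≤ k) :
    poch (b + 1 + i) (k - i) = ff ((k:ℝ) + b) (k - i) := by
  unfold poch ff
  rw [← Finset.prod_range_reflect (fun s => (k:ℝ) + b - s) (k - i)]
  refine Finset.prod_congr rfl fun s hs => ?_
  have hs' : s < k - i := Finset.mem_range.mp hs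
  have h1 : k - i - 1 - s + s + 1 + i = k := by omega
  have h2 : ((k - i - 1 - s : ℕ) : ℝ) + s + 1 + i = k := by exact_mod_cast congrArg (Nat.cast : ℕ → ℝ) h1
  linarith [h2]

lemma poch_ff (b : ℝ) (k i : ℕ) (h : i ≤ k) :
    poch (b + 1) i * ff ((k:ℝ) + b) (k - i) = poch (b + 1) k := by
  conv_rhs => rw [show k = i + (k - i) by omega]
  rw [poch_add, ← poch_shift b k i h]

lemma neg_pow_eq (m n : ℕ) (h : m % 2 = n % 2) : (-1:ℝ)^m = (-1)^n := by
  conv_lhs => rw [← Nat.div_add_mod m 2]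
  conv_rhs => rw [← Nat.div_add_mod n 2]
  rw [pow_add, pow_add, pow_mul, pow_mul, neg_one_sq, one_pow, one_pow, h]

lemma coef_eq (k l i j : ℕ) (hik : i ≤ k) (hjl : j ≤ l) (α β γ : ℝ)
    (hα : -1 < α) (hβ : -1 < β) :
    ((l.choose j : ℝ) * ff ((l:ℝ)+β) j * ff ((k:ℝ)+(l:ℝ)+γ) (l-j) * (-1:ℝ)^(l+j)) *
      ((k.choose i : ℝ) * ff ((k:ℝ)+α) i * ff ((k:ℝ)+(l:ℝ)+γ - (l:ℝ) + (j:ℝ)) (k-i) * (-1:ℝ)^(k+i))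
    = (poch (α+1) k * poch (β+1) l) *
      ((poch (-γ - ((k:ℝ)+(l:ℝ))) ((k-i)+(l-j)) * poch (-(k:ℝ)) (k-i) * poch (-(l:ℝ)) (l-j)) /
        (poch (α+1) (k-i) * poch (β+1) (l-j) * (Nat.factorial (k-i) : ℝ) * (Nat.factorial (l-j) : ℝ))) *
      (-1:ℝ)^((k-i)+(l-j)) := by
  have hpα : poch (α+1) (k-i) ≠ 0 := ne_of_gt (poch_pos (by linarith) _)
  have hpβ : poch (β+1) (l-j) ≠ 0 := ne_of_gt (poch_pos (by linarith) _)
  have hf1 : (Nat.factorial (k-i) : ℝ) ≠ 0 := Nat.cast_ne_zero.mpr (Nat.factorial_ne_zero _)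
  have hf2 : (Nat.factorial (l-j) : ℝ) ≠ 0 := Nat.cast_ne_zero.mpr (Nat.factorial_ne_zero _)
  have hγ1 : poch (-γ - ((k:ℝ)+(l:ℝ))) ((k-i)+(l-j))
      = (-1:ℝ)^((k-i)+(l-j)) * ff ((k:ℝ)+(l:ℝ)+γ) ((k-i)+(l-j)) := by
    rw [show -γ - ((k:ℝ)+(l:ℝ)) = -((k:ℝ)+(l:ℝ)+γ) by ring, poch_neg]
  have hk1 : poch (-(k:ℝ)) (k-i) = (-1:ℝ)^(k-i) * ((Nat.factorial (k-i) : ℝ) * (k.choose i : ℝ)) := by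
    rw [poch_neg, ff_cast', Nat.choose_symm hik]
  have hl1 : poch (-(l:ℝ)) (l-j) = (-1:ℝ)^(l-j) * ((Nat.factorial (l-j) : ℝ) * (l.choose j : ℝ)) := by
    rw [poch_neg, ff_cast', Nat.choose_symm hjl]
  have hγ2 : ff ((k:ℝ)+(l:ℝ)+γ) ((k-i)+(l-j))
      = ff ((k:ℝ)+(l:ℝ)+γ) (l-j) * ff ((k:ℝ)+(l:ℝ)+γ - (l:ℝ) + (j:ℝ)) (k-i) := by
    rw [show (k-i)+(l-j) = (l-j)+(k-i) by omega, ff_add]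
    congr 2
    rw [Nat.cast_sub hjl]; ring
  have hα2 : ff ((k:ℝ)+α) i = poch (α+1) k / poch (α+1) (k-i) := by
    rw [eq_div_iff hpα, mul_comm]
    have := poch_ff α k (k-i) (Nat.sub_le k i)
    rwa [Nat.sub_sub_self hik] at this
  have hβ2 : ff ((l:ℝ)+β) j = poch (β+1) l / poch (β+1) (l-j) := by
    rw [eq_div_iff hpβ, mul_comm]
    have := poch_ff β l (l-j) (Nat.sub_le l j)
    rwa [Nat.sub_sub_self hjl] at this
  rw [hγ1, hk1, hl1, hγ2, hα2, hβ2,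
    neg_pow_eq ((k-i)+(l-j)) ((k+i)+(l+j)) (by omega),
    neg_pow_eq (k-i) (k+i) (by omega), neg_pow_eq (l-j) (l+j) (by omega),
    pow_add (-1:ℝ) (k+i) (l+j)]
  rcases Nat.even_or_odd (k+i) with h1 | h1 <;> rcases Nat.even_or_odd (l+j) with h2 | h2 <;>
    simp only [h1.neg_one_pow, h2.neg_one_pow] <;> field_simp <;> ring

lemma hasDerivAt_term (c a A t : ℝ) (ht : t ∈ Set.Ioo (0:ℝ) c) :
    HasDerivAt (fun t : ℝ => t ^ a * (c - t) ^ A)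
      ((a * t ^ (a-1)) * (c-t) ^ A + t ^ a * (A * (c-t) ^ (A-1) * (-1))) t := by
  have h1 : HasDerivAt (fun t : ℝ => t ^ a) (a * t ^ (a-1)) t :=
    Real.hasDerivAt_rpow_const (Or.inl ht.1.ne')
  have hc : HasDerivAt (fun t : ℝ => c - t) (-1) t := by
    simpa using (hasDerivAt_const t c).fun_sub (hasDerivAt_id t)
  have h2 : HasDerivAt (fun t : ℝ => (c - t) ^ A) (A * (c - t) ^ (A-1) * (-1)) t :=
    (Real.hasDerivAt_rpow_const (x := c - t) (p := A) (Or.inl (sub_pos.2 ht.2).ne')).comp t hc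
  exact h1.mul h2

lemma iterA (c a A : ℝ) (m : ℕ) : ∀ t ∈ Set.Ioo (0:ℝ) c,
    iteratedDeriv m (fun t : ℝ => t ^ a * (c - t) ^ A) t
      = ∑ j ∈ Finset.range (m+1),
          ((m.choose j : ℝ) * ff a j * ff A (m-j) * (-1:ℝ)^(m+j)) *
            (t ^ (a - j) * (c - t) ^ (A - m + j)) := by
  induction m with
  | zero =>
    intro t ht
    simp [ff]
  | succ m IH =>
    intro t ht
    set E : ℝ → ℝ := fun t => ∑ j ∈ Finset.range (m+1),
        ((m.choose j : ℝ) * ff a j * ff A (m-j) * (-1:ℝ)^(m+j)) *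
          (t ^ (a - j) * (c - t) ^ (A - m + j)) with hE
    have hEq : iteratedDeriv m (fun t : ℝ => t ^ a * (c - t) ^ A) =ᶠ[nhds t] E := by
      filter_upwards [isOpen_Ioo.mem_nhds ht] with s hs
      exact IH s hs
    have hD : HasDerivAt E
        (∑ j ∈ Finset.range (m+1),
          ((m.choose j : ℝ) * ff a j * ff A (m-j) * (-1:ℝ)^(m+j)) *
            (((a - j) * t ^ (a - j - 1)) * (c-t) ^ (A - m + j)
              + t ^ (a - j) * ((A - m + j) * (c-t) ^ (A - m + j - 1) * (-1)))) t :=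
      HasDerivAt.fun_sum fun j _ => (hasDerivAt_term c (a - j) (A - m + j) t ht).const_mul _
    rw [iteratedDeriv_succ, hEq.deriv_eq, hD.deriv]
    set T : ℕ → ℝ := fun j => t ^ (a - j) * (c - t) ^ (A - ((m:ℝ)+1) + j) with hT
    set c1 : ℕ → ℝ := fun j => (m.choose j : ℝ) * ff a (j+1) * ff A (m-j) * (-1:ℝ)^(m+j) with hc1
    set c2 : ℕ → ℝ := fun j => (m.choose j : ℝ) * ff a j * ff A (m-j+1) * (-1:ℝ)^(m+1+j) with hc2
    have hstep1 : ∑ j ∈ Finset.range (m+1),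
        ((m.choose j : ℝ) * ff a j * ff A (m-j) * (-1:ℝ)^(m+j)) *
          (((a - j) * t ^ (a - j - 1)) * (c-t) ^ (A - m + j)
            + t ^ (a - j) * ((A - m + j) * (c-t) ^ (A - m + j - 1) * (-1)))
        = (∑ j ∈ Finset.range (m+1), c1 j * T (j+1)) + ∑ j ∈ Finset.range (m+1), c2 j * T j := by
      rw [← Finset.sum_add_distrib]
      refine Finset.sum_congr rfl fun j hj => ?_
      have hjm : j ≤ m := Nat.lt_succ_iff.mp (Finset.mem_range.mp hj)
      have hmj : ((m - j : ℕ) : ℝ) = (m:ℝ) - j := Nat.cast_sub hjm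
      simp only [hT, hc1, hc2, ff_succ, hmj]
      push_cast
      rw [show a - ((j:ℝ)+1) = a - ↑j - 1 by ring,
        show A - ((m:ℝ)+1) + ((j:ℝ)+1) = A - ↑m + ↑j by ring,
        show A - ((m:ℝ)+1) + (j:ℝ) = A - ↑m + ↑j - 1 by ring]
      ring
    rw [hstep1]
    have hv0 : ((Nat.choose (m+1) 0 : ℝ) * ff a 0 * ff A (m+1-0) * (-1:ℝ)^(m+1+0)) = c2 0 := by
      simp [hc2, ff]
    have hvj : ∀ j ≤ m, ((Nat.choose (m+1) (j+1) : ℝ) * ff a (j+1) * ff A (m+1-(j+1)) * (-1:ℝ)^(m+1+(j+1)))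
        = c1 j + c2 (j+1) := by
      intro j hjm
      simp only [hc1, hc2, Nat.choose_succ_succ, Nat.succ_sub_succ]
      push_cast
      rcases lt_or_eq_of_le hjm with h | h
      · have : m - (j+1) + 1 = m - j := by omega
        rw [this]
        ring
      · subst h
        simp [Nat.choose_succ_self]
    have hrhs : ∑ j ∈ Finset.range (m+1+1),
        ((Nat.choose (m+1) j : ℝ) * ff a j * ff A (m+1-j) * (-1:ℝ)^(m+1+j)) * T j
        = (∑ j ∈ Finset.range (m+1), c1 j * T (j+1)) + ∑ j ∈ Finset.range (m+1), c2 j * T j := by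
      rw [Finset.sum_range_succ' _ (m+1)]
      have : ∀ j ∈ Finset.range (m+1),
          ((Nat.choose (m+1) (j+1) : ℝ) * ff a (j+1) * ff A (m+1-(j+1)) * (-1:ℝ)^(m+1+(j+1))) * T (j+1)
          = c1 j * T (j+1) + c2 (j+1) * T (j+1) := by
        intro j hj
        rw [hvj j (Nat.lt_succ_iff.mp (Finset.mem_range.mp hj))]; ring
      rw [Finset.sum_congr rfl this, Finset.sum_add_distrib, hv0]
      have h2 : ∑ j ∈ Finset.range (m+1), c2 (j+1) * T (j+1)
          = (∑ j ∈ Finset.range (m+1), c2 j * T j) - c2 0 * T 0 := by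
        rw [Finset.sum_range_succ' (fun j => c2 j * T j) m]
        rw [Finset.sum_range_succ (fun j => c2 (j+1) * T (j+1)) m]
        have : c2 (m+1) = 0 := by simp [hc2, Nat.choose_succ_self]
        rw [this]; ring
      rw [h2]; ring
    rw [← hrhs]
    refine Finset.sum_congr rfl fun j hj => ?_
    have : T j = t ^ (a - j) * (c - t) ^ (A - ((m+1 : ℕ):ℝ) + j) := by
      simp only [hT]; push_cast; ring_nf
    rw [this]

lemma iteratedDeriv_const_mul'' (m : ℕ) (C : ℝ) (f : ℝ → ℝ) :
    iteratedDeriv m (fun t => C * f t) = fun x => C * iteratedDeriv m f x := by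
  induction m with
  | zero => funext x; simp
  | succ m IH =>
    funext x
    rw [iteratedDeriv_succ, IH, iteratedDeriv_succ, deriv_const_mul_field']

lemma iteratedDeriv_const_mul_app (m : ℕ) (C : ℝ) (f : ℝ → ℝ) (X : ℝ) :
    iteratedDeriv m (fun t => C * f t) X = C * iteratedDeriv m f X :=
  congrFun (iteratedDeriv_const_mul'' m C f) X

lemma iterB (c : ℝ) {ι : Type} (J : Finset ι) (d : ι → ℝ) (a : ℝ) (A : ι → ℝ) (m : ℕ) :
    ∀ t ∈ Set.Ioo (0:ℝ) c,
    iteratedDeriv m (fun t : ℝ => ∑ j ∈ J, d j * (t ^ a * (c - t) ^ A j)) t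
      = ∑ j ∈ J, d j * iteratedDeriv m (fun t : ℝ => t ^ a * (c - t) ^ A j) t := by
  induction m with
  | zero => intro t ht; simp
  | succ m IH =>
    intro t ht
    have hEj : ∀ j : ι, HasDerivAt (fun s : ℝ => ∑ i ∈ Finset.range (m+1),
        ((m.choose i : ℝ) * ff a i * ff (A j) (m-i) * (-1:ℝ)^(m+i)) *
          (s ^ (a - i) * (c - s) ^ (A j - m + i)))
        (∑ i ∈ Finset.range (m+1),
        ((m.choose i : ℝ) * ff a i * ff (A j) (m-i) * (-1:ℝ)^(m+i)) *
          (((a - i) * t ^ (a - i - 1)) * (c-t) ^ (A j - m + i)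
            + t ^ (a - i) * ((A j - m + i) * (c-t) ^ (A j - m + i - 1) * (-1)))) t :=
      fun j => HasDerivAt.fun_sum fun i _ => (hasDerivAt_term c _ _ t ht).const_mul _
    have hgj : ∀ j : ι, iteratedDeriv (m+1) (fun t : ℝ => t ^ a * (c - t) ^ A j) t
        = ∑ i ∈ Finset.range (m+1),
        ((m.choose i : ℝ) * ff a i * ff (A j) (m-i) * (-1:ℝ)^(m+i)) *
          (((a - i) * t ^ (a - i - 1)) * (c-t) ^ (A j - m + i)
            + t ^ (a - i) * ((A j - m + i) * (c-t) ^ (A j - m + i - 1) * (-1))) := by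
      intro j
      rw [iteratedDeriv_succ]
      have hq : iteratedDeriv m (fun t : ℝ => t ^ a * (c - t) ^ A j) =ᶠ[nhds t]
          fun s => ∑ i ∈ Finset.range (m+1),
            ((m.choose i : ℝ) * ff a i * ff (A j) (m-i) * (-1:ℝ)^(m+i)) *
              (s ^ (a - i) * (c - s) ^ (A j - m + i)) := by
        filter_upwards [isOpen_Ioo.mem_nhds ht] with s hs
        exact iterA c a (A j) m s hs
      rw [hq.deriv_eq, (hEj j).deriv]
    have hF : iteratedDeriv m (fun t : ℝ => ∑ j ∈ J, d j * (t ^ a * (c - t) ^ A j)) =ᶠ[nhds t]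
        fun s => ∑ j ∈ J, d j * ∑ i ∈ Finset.range (m+1),
            ((m.choose i : ℝ) * ff a i * ff (A j) (m-i) * (-1:ℝ)^(m+i)) *
              (s ^ (a - i) * (c - s) ^ (A j - m + i)) := by
      filter_upwards [isOpen_Ioo.mem_nhds ht] with s hs
      rw [IH s hs]
      exact Finset.sum_congr rfl fun j _ => by rw [iterA c a (A j) m s hs]
    rw [iteratedDeriv_succ, hF.deriv_eq,
      (HasDerivAt.fun_sum fun j _ => (hEj j).const_mul (d j)).deriv]
    exact Finset.sum_congr rfl fun j _ => by rw [hgj j]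

lemma sum_sum_reflect (k l : ℕ) (f : ℕ → ℕ → ℝ) :
    ∑ j ∈ Finset.range (l+1), ∑ i ∈ Finset.range (k+1), f (k-i) (l-j)
      = ∑ j ∈ Finset.range (l+1), ∑ i ∈ Finset.range (k+1), f i j := by
  have h1 : ∀ j, ∑ i ∈ Finset.range (k+1), f (k-i) j = ∑ i ∈ Finset.range (k+1), f i j := by
    intro j
    have := Finset.sum_range_reflect (fun i => f i j) (k+1)
    simpa [Nat.add_sub_cancel] using this
  calc ∑ j ∈ Finset.range (l+1), ∑ i ∈ Finset.range (k+1), f (k-i) (l-j)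
      = ∑ j ∈ Finset.range (l+1), ∑ i ∈ Finset.range (k+1), f i (l-j) :=
        Finset.sum_congr rfl fun j _ => h1 (l-j)
    _ = ∑ j ∈ Finset.range (l+1), ∑ i ∈ Finset.range (k+1), f i j := by
        have := Finset.sum_range_reflect (fun j => ∑ i ∈ Finset.range (k+1), f i j) (l+1)
        simpa [Nat.add_sub_cancel] using this

lemma keyD (k l : ℕ) (α β γ : ℝ) (hα : -1 < α) (hβ : -1 < β)
    (x y : ℝ) (hx : 0 < x) (hy : 0 < y) (hxy : x + y < 1) :
    iteratedDeriv k (fun s => iteratedDeriv l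
        (fun t => s ^ ((k:ℝ) + α) * t ^ ((l:ℝ) + β) * (1 - s - t) ^ ((k:ℝ) + (l:ℝ) + γ)) y) x
      = x ^ α * y ^ β * (1 - x - y) ^ γ * (poch (α + 1) k * poch (β + 1) l) *
        ∑ i ∈ Finset.range (k + 1), ∑ j ∈ Finset.range (l + 1),
          (poch (-γ - ((k:ℝ) + (l:ℝ))) (i + j) * poch (-(k : ℝ)) i * poch (-(l : ℝ)) j /
            (poch (α + 1) i * poch (β + 1) j * (Nat.factorial i : ℝ) * (Nat.factorial j : ℝ))) *
          ((-1 : ℝ) ^ (i + j) * x ^ i * y ^ j * (1 - x - y) ^ (k + l - i - j)) := by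
  have hx1 : x ∈ Set.Ioo (0:ℝ) (1 - y) := ⟨hx, by linarith⟩
  have hz : (0:ℝ) < 1 - x - y := by linarith
  have hinner : ∀ s ∈ Set.Ioo (0:ℝ) (1 - y),
      iteratedDeriv l (fun t => s ^ ((k:ℝ) + α) * t ^ ((l:ℝ) + β) * (1 - s - t) ^ ((k:ℝ) + (l:ℝ) + γ)) y
        = ∑ j ∈ Finset.range (l+1),
            (((l.choose j : ℝ) * ff ((l:ℝ)+β) j * ff ((k:ℝ)+(l:ℝ)+γ) (l-j) * (-1:ℝ)^(l+j))
              * y ^ ((l:ℝ) + β - (j:ℝ))) *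
            (s ^ ((k:ℝ) + α) * (1 - y - s) ^ ((k:ℝ)+(l:ℝ)+γ - (l:ℝ) + (j:ℝ))) := by
    intro s hs
    have h1 : (fun t : ℝ => s ^ ((k:ℝ) + α) * t ^ ((l:ℝ) + β) * (1 - s - t) ^ ((k:ℝ)+(l:ℝ)+γ))
        = fun t : ℝ => s ^ ((k:ℝ) + α) * (t ^ ((l:ℝ) + β) * (1 - s - t) ^ ((k:ℝ)+(l:ℝ)+γ)) := by
      funext t; ring
    rw [h1, iteratedDeriv_const_mul_app,
      iterA (1 - s) ((l:ℝ) + β) ((k:ℝ)+(l:ℝ)+γ) l y ⟨hy, by have := hs.2; simp at this ⊢; linarith⟩,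
      Finset.mul_sum]
    refine Finset.sum_congr rfl fun j hj => ?_
    rw [show (1:ℝ) - s - y = 1 - y - s by ring]
    ring
  have houter : iteratedDeriv k (fun s => iteratedDeriv l
      (fun t => s ^ ((k:ℝ) + α) * t ^ ((l:ℝ) + β) * (1 - s - t) ^ ((k:ℝ)+(l:ℝ)+γ)) y) x
      = iteratedDeriv k (fun s => ∑ j ∈ Finset.range (l+1),
          (((l.choose j : ℝ) * ff ((l:ℝ)+β) j * ff ((k:ℝ)+(l:ℝ)+γ) (l-j) * (-1:ℝ)^(l+j))
            * y ^ ((l:ℝ) + β - (j:ℝ))) *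
          (s ^ ((k:ℝ) + α) * (1 - y - s) ^ ((k:ℝ)+(l:ℝ)+γ - (l:ℝ) + (j:ℝ)))) x :=
    Filter.EventuallyEq.iteratedDeriv_eq k (by
      filter_upwards [isOpen_Ioo.mem_nhds hx1] with s hs
      exact hinner s hs)
  rw [houter,
    iterB (1-y) (Finset.range (l+1))
      (fun j => ((l.choose j : ℝ) * ff ((l:ℝ)+β) j * ff ((k:ℝ)+(l:ℝ)+γ) (l-j) * (-1:ℝ)^(l+j))
        * y ^ ((l:ℝ) + β - (j:ℝ)))
      ((k:ℝ) + α)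
      (fun j => (k:ℝ)+(l:ℝ)+γ - (l:ℝ) + (j:ℝ)) k x hx1]
  have hL : ∀ j ∈ Finset.range (l+1),
      (((l.choose j : ℝ) * ff ((l:ℝ)+β) j * ff ((k:ℝ)+(l:ℝ)+γ) (l-j) * (-1:ℝ)^(l+j))
        * y ^ ((l:ℝ) + β - (j:ℝ))) *
      iteratedDeriv k (fun s : ℝ => s ^ ((k:ℝ)+α) * (1 - y - s) ^ ((k:ℝ)+(l:ℝ)+γ - (l:ℝ) + (j:ℝ))) x
      = ∑ i ∈ Finset.range (k+1),
        ((((l.choose j : ℝ) * ff ((l:ℝ)+β) j * ff ((k:ℝ)+(l:ℝ)+γ) (l-j) * (-1:ℝ)^(l+j))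
          * y ^ ((l:ℝ) + β - (j:ℝ))) *
        (((k.choose i : ℝ) * ff ((k:ℝ)+α) i * ff ((k:ℝ)+(l:ℝ)+γ - (l:ℝ) + (j:ℝ)) (k-i) * (-1:ℝ)^(k+i)) *
          (x ^ ((k:ℝ)+α - (i:ℝ)) * (1 - y - x) ^ ((k:ℝ)+(l:ℝ)+γ - (l:ℝ) + (j:ℝ) - (k:ℝ) + (i:ℝ))))) := by
    intro j hj
    rw [iterA (1-y) ((k:ℝ)+α) ((k:ℝ)+(l:ℝ)+γ - (l:ℝ) + (j:ℝ)) k x hx1, Finset.mul_sum]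
  rw [Finset.sum_congr rfl hL]
  -- now transform the RHS
  conv_rhs => simp only [Finset.mul_sum]
  conv_rhs => rw [Finset.sum_comm]
  have hRW : ∀ (g : ℕ → ℕ → ℝ),
      (∑ j ∈ Finset.range (l+1), ∑ i ∈ Finset.range (k+1), g i j)
        = ∑ j ∈ Finset.range (l+1), ∑ i ∈ Finset.range (k+1), g (k-i) (l-j) :=
    fun g => (sum_sum_reflect k l g).symm
  conv_rhs =>
    rw [hRW (fun i j => x ^ α * y ^ β * (1 - x - y) ^ γ * (poch (α + 1) k * poch (β + 1) l) *
      ((poch (-γ - ((k:ℝ) + (l:ℝ))) (i + j) * poch (-(k : ℝ)) i * poch (-(l : ℝ)) j /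
        (poch (α + 1) i * poch (β + 1) j * (Nat.factorial i : ℝ) * (Nat.factorial j : ℝ))) *
      ((-1 : ℝ) ^ (i + j) * x ^ i * y ^ j * (1 - x - y) ^ (k + l - i - j))))]
  refine Finset.sum_congr rfl fun j hj => ?_
  have hjl : j ≤ l := Nat.lt_succ_iff.mp (Finset.mem_range.mp hj)
  refine Finset.sum_congr rfl fun i hi => ?_
  have hik : i ≤ k := Nat.lt_succ_iff.mp (Finset.mem_range.mp hi)
  -- termwise
  have hx2 : x ^ ((k:ℝ)+α - (i:ℝ)) = x ^ α * x ^ (k-i) := by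
    rw [show (k:ℝ)+α - (i:ℝ) = α + ((k-i : ℕ) : ℝ) by rw [Nat.cast_sub hik]; ring,
      rpow_add hx, rpow_natCast]
  have hy2 : y ^ ((l:ℝ)+β - (j:ℝ)) = y ^ β * y ^ (l-j) := by
    rw [show (l:ℝ)+β - (j:ℝ) = β + ((l-j : ℕ) : ℝ) by rw [Nat.cast_sub hjl]; ring,
      rpow_add hy, rpow_natCast]
  have hz2 : (1 - y - x) ^ ((k:ℝ)+(l:ℝ)+γ - (l:ℝ) + (j:ℝ) - (k:ℝ) + (i:ℝ))
      = (1 - x - y) ^ γ * (1 - x - y) ^ (k + l - (k-i) - (l-j)) := by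
    rw [show (1:ℝ) - y - x = 1 - x - y by ring,
      show (k:ℝ)+(l:ℝ)+γ - (l:ℝ) + (j:ℝ) - (k:ℝ) + (i:ℝ)
        = γ + ((k + l - (k-i) - (l-j) : ℕ) : ℝ) by
          rw [show k + l - (k-i) - (l-j) = i + j by omega]; push_cast; ring,
      rpow_add hz, rpow_natCast]
  rw [hx2, hy2, hz2]
  linear_combination (x ^ α * x ^ (k-i) * (y ^ β * y ^ (l-j)) *
    ((1 - x - y) ^ γ * (1 - x - y) ^ (k + l - (k-i) - (l-j)))) *
    coef_eq k l i j hik hjl α β γ hα hβ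
section
open MvPolynomial

/-- Explicit expansion of the Rodrigues-type derivative
`∂ⁿ/∂xᵏ∂y^{n-k} [x^{k+α} y^{n-k+β} (1-x-y)^{n+γ}]`, and the fact that after
division by the weight `x^α y^β (1-x-y)^γ` it is a polynomial of total degree
at most `n`. -/
theorem stmt1 (k n : ℕ) (hkn : k ≤ n) (α β γ : ℝ)
    (hα : -1 < α) (hβ : -1 < β) (hγ : -1 < γ)
    (x y : ℝ) (hx : 0 < x) (hy : 0 < y) (hxy : x + y < 1) :
    (pderiv2 k (n - k) (fun u v =>
        u ^ ((k : ℝ) + α) * v ^ ((n : ℝ) - (k : ℝ) + β) * (1 - u - v) ^ ((n : ℝ) + γ)) x y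
      = x ^ α * y ^ β * (1 - x - y) ^ γ * (poch (α + 1) k * poch (β + 1) (n - k)) *
        ∑ i ∈ Finset.range (k + 1), ∑ j ∈ Finset.range (n - k + 1),
          (poch (-γ - (n : ℝ)) (i + j) * poch (-(k : ℝ)) i * poch ((k : ℝ) - (n : ℝ)) j /
            (poch (α + 1) i * poch (β + 1) j * (Nat.factorial i : ℝ) * (Nat.factorial j : ℝ))) *
          ((-1 : ℝ) ^ (i + j) * x ^ i * y ^ j * (1 - x - y) ^ (n - i - j)))
    ∧ ∃ P : MvPolynomial (Fin 2) ℝ, P.totalDegree ≤ n ∧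
        ∀ x' y' : ℝ, 0 < x' → 0 < y' → x' + y' < 1 →
          (x' ^ α * y' ^ β * (1 - x' - y') ^ γ)⁻¹ *
            pderiv2 k (n - k) (fun u v =>
              u ^ ((k : ℝ) + α) * v ^ ((n : ℝ) - (k : ℝ) + β) *
                (1 - u - v) ^ ((n : ℝ) + γ)) x' y'
          = MvPolynomial.eval ![x', y'] P := by
  obtain ⟨l, rfl⟩ : ∃ l, n = k + l := ⟨n - k, by omega⟩
  have hnk : k + l - k = l := by omega
  have e1 : ((k+l:ℕ):ℝ) - (k:ℝ) + β = (l:ℝ) + β := by push_cast; ring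
  have e2 : ((k+l:ℕ):ℝ) + γ = (k:ℝ)+(l:ℝ)+γ := by push_cast; ring
  have e3 : -γ - ((k+l:ℕ):ℝ) = -γ - ((k:ℝ)+(l:ℝ)) := by push_cast; ring
  have e4 : (k:ℝ) - ((k+l:ℕ):ℝ) = -(l:ℝ) := by push_cast; ring
  have key : ∀ x' y' : ℝ, 0 < x' → 0 < y' → x' + y' < 1 →
      pderiv2 k (k + l - k) (fun u v =>
          u ^ ((k : ℝ) + α) * v ^ (((k+l:ℕ) : ℝ) - (k : ℝ) + β) *
            (1 - u - v) ^ (((k+l:ℕ) : ℝ) + γ)) x' y'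
        = x' ^ α * y' ^ β * (1 - x' - y') ^ γ * (poch (α + 1) k * poch (β + 1) (k + l - k)) *
          ∑ i ∈ Finset.range (k + 1), ∑ j ∈ Finset.range (k + l - k + 1),
            (poch (-γ - ((k+l:ℕ) : ℝ)) (i + j) * poch (-(k : ℝ)) i * poch ((k : ℝ) - ((k+l:ℕ) : ℝ)) j /
              (poch (α + 1) i * poch (β + 1) j * (Nat.factorial i : ℝ) * (Nat.factorial j : ℝ))) *
            ((-1 : ℝ) ^ (i + j) * x' ^ i * y' ^ j * (1 - x' - y') ^ (k + l - i - j)) := by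
    intro x' y' hx' hy' hxy'
    simp only [hnk, e1, e2, e3, e4, pderiv2]
    exact keyD k l α β γ hα hβ x' y' hx' hy' hxy'
  refine ⟨key x y hx hy hxy, ?_⟩
  refine ⟨MvPolynomial.C (poch (α+1) k * poch (β+1) (k+l-k)) *
      ∑ i ∈ Finset.range (k+1), ∑ j ∈ Finset.range (k+l-k+1),
        MvPolynomial.C (poch (-γ - ((k+l:ℕ):ℝ)) (i+j) * poch (-(k:ℝ)) i * poch ((k:ℝ) - ((k+l:ℕ):ℝ)) j /
            (poch (α+1) i * poch (β+1) j * (Nat.factorial i : ℝ) * (Nat.factorial j : ℝ))) *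
          (MvPolynomial.C ((-1:ℝ)^(i+j)) * MvPolynomial.X 0 ^ i * MvPolynomial.X 1 ^ j *
            (1 - MvPolynomial.X 0 - MvPolynomial.X 1) ^ (k+l-i-j)), ?_, ?_⟩
  · -- total degree bound
    refine le_trans (totalDegree_mul _ _) ?_
    rw [totalDegree_C, zero_add]
    refine totalDegree_finsetSum_le fun i hi => ?_
    refine totalDegree_finsetSum_le fun j hj => ?_
    have hik : i ≤ k := by have := Finset.mem_range.mp hi; omega
    have hjl : j ≤ l := by have := Finset.mem_range.mp hj; omega
    have hQ : (1 - MvPolynomial.X 0 - MvPolynomial.X 1 : MvPolynomial (Fin 2) ℝ).totalDegree ≤ 1 := by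
      refine le_trans (totalDegree_sub _ _) (max_le ?_ (le_of_eq (totalDegree_X _)))
      refine le_trans (totalDegree_sub _ _) (max_le ?_ (le_of_eq (totalDegree_X _)))
      simp [totalDegree_one]
    have hXi : ((MvPolynomial.X 0 : MvPolynomial (Fin 2) ℝ) ^ i).totalDegree ≤ i :=
      le_trans (totalDegree_pow _ _) (by simp [totalDegree_X])
    have hXj : ((MvPolynomial.X 1 : MvPolynomial (Fin 2) ℝ) ^ j).totalDegree ≤ j :=
      le_trans (totalDegree_pow _ _) (by simp [totalDegree_X])
    have hQe : ((1 - MvPolynomial.X 0 - MvPolynomial.X 1 : MvPolynomial (Fin 2) ℝ) ^ (k+l-i-j)).totalDegree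
        ≤ k+l-i-j := by
      refine le_trans (totalDegree_pow _ _) ?_
      calc (k+l-i-j) * (1 - MvPolynomial.X 0 - MvPolynomial.X 1 : MvPolynomial (Fin 2) ℝ).totalDegree
          ≤ (k+l-i-j) * 1 := Nat.mul_le_mul_left _ hQ
        _ = k+l-i-j := by omega
    refine le_trans (totalDegree_mul _ _) ?_
    refine le_trans (add_le_add (le_of_eq (totalDegree_C _))
      (le_trans (totalDegree_mul _ _) (add_le_add
        (le_trans (totalDegree_mul _ _) (add_le_add
          (le_trans (totalDegree_mul _ _) (add_le_add (le_of_eq (totalDegree_C _)) hXi)) hXj)) hQe))) ?_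
    omega
  · intro x' y' hx' hy' hxy'
    rw [key x' y' hx' hy' hxy']
    have hz' : (0:ℝ) < 1 - x' - y' := by linarith
    have hw : x' ^ α * y' ^ β * (1 - x' - y') ^ γ ≠ 0 := by positivity
    simp only [map_mul, map_sum, map_pow, map_sub, map_one, MvPolynomial.eval_C,
      MvPolynomial.eval_X, Matrix.cons_val_zero, Matrix.cons_val_one, Matrix.head_cons]
    field_simp
end
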